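/- For every m ≥ 1 and 1 ≤ j ≤ m − 1, the rational number 3^(j−1) · binom(3^(m−1) − 1, j − 1) / j is a positive integer. -/

import Mathlib

theorem stmt_14 (m j : ℕ) (hm : 1 ≤ m) (hj : 1 ≤ j) (hjm : j ≤ m - 1) :
    ∃ k : ℕ, 0 < k ∧
      ((3 ^ (j - 1) * Nat.choose (3 ^ (m - 1) - 1) (j - 1) : ℚ) / (j : ℚ)) = (k : ℚ) := by
  set N : ℕ := 3 ^ (m - 1) with hN
  have hNpos : 1 ≤ N := Nat.one_le_pow _ _ (by norm_num)
  have hjne : j ≠ 0 := by omega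
  have hmN : m ≤ N := by
    have := Nat.lt_pow_self (n := m - 1) (by norm_num : 1 < 3)
    omega
  have hle : j - 1 ≤ N - 1 := by omega
  have hCpos : 0 < Nat.choose (N - 1) (j - 1) := Nat.choose_pos hle
  have hid : N * Nat.choose (N - 1) (j - 1) = Nat.choose N j * j := by
    have := Nat.add_one_mul_choose_eq (N - 1) (j - 1)
    have h1 : N - 1 + 1 = N := by omega
    have h2 : j - 1 + 1 = j := by omega
    rwa [h1, h2] at this
  set a : ℕ := j.factorization 3 with ha
  have hp3 : (3 : ℕ).Prime := by norm_num
  have hpj : 3 ^ a ∣ j := Nat.ordProj_dvd j 3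
  have hbdvd : (j / 3 ^ a) ∣ j := Nat.ordCompl_dvd j 3
  have hjeq : 3 ^ a * (j / 3 ^ a) = j := Nat.ordProj_mul_ordCompl_eq_self j 3
  have haj : a ≤ j - 1 := by
    have h1 : a < 3 ^ a := Nat.lt_pow_self (n := a) (by norm_num : 1 < 3)
    have h2 : 3 ^ a ≤ j := Nat.le_of_dvd (by omega) hpj
    omega
  have hdvd1 : (3 : ℕ) ^ a ∣ 3 ^ (j - 1) := pow_dvd_pow 3 haj
  have hnot3 : ¬ (3 ∣ j / 3 ^ a) := Nat.not_dvd_ordCompl hp3 hjne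
  have hcop : Nat.Coprime (j / 3 ^ a) N := by
    rw [hN]
    exact Nat.Coprime.pow_right _ (((Nat.Prime.coprime_iff_not_dvd hp3).mpr hnot3).symm)
  have hbC : (j / 3 ^ a) ∣ Nat.choose (N - 1) (j - 1) := by
    have hb : (j / 3 ^ a) ∣ N * Nat.choose (N - 1) (j - 1) := by
      rw [hid]
      exact hbdvd.trans (dvd_mul_left _ _)
    exact (Nat.Coprime.dvd_of_dvd_mul_left hcop hb)
  have hjdvd : j ∣ 3 ^ (j - 1) * Nat.choose (N - 1) (j - 1) := by
    have h := mul_dvd_mul hdvd1 hbC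
    rwa [hjeq] at h
  obtain ⟨c, hc⟩ := hjdvd
  have hcpos : 0 < c := by
    rcases Nat.eq_zero_or_pos c with h | h
    · exfalso
      rw [h, mul_zero] at hc
      have : 0 < 3 ^ (j - 1) * Nat.choose (N - 1) (j - 1) :=
        Nat.mul_pos (Nat.pow_pos (by norm_num)) hCpos
      omega
    · exact h
  refine ⟨c, hcpos, ?_⟩
  have hjQ : (j : ℚ) ≠ 0 := by exact_mod_cast hjne
  rw [div_eq_iff hjQ]
  have hcQ : ((3:ℚ) ^ (j - 1) * ((N - 1).choose (j - 1)) : ℚ) = (j : ℚ) * c := by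
    exact_mod_cast congrArg (Nat.cast : ℕ → ℚ) hc
  linear_combination hcQ
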